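/- arXiv:2004.07809 — 3 statements merged into one kernel-verified Lean document; each statement's English description precedes it below -/
import Mathlib

section
/- Let h(y) = -y·log₂(y) - (1-y)·log₂(1-y) be the binary entropy. If g : [x₀, x₁] → ℝ (with x₀, x₁ > 0) is convex and satisfies 0 ≤ g(x)/x ≤ 1/2 for all x in [x₀, x₁], then the function f(x) = x · h(1/2 - g(x)/x) is concave on [x₀, x₁]. -/
/-- Binary entropy with base-2 logarithm. -/
noncomputable def binEnt (y : ℝ) : ℝ :=
  -y * Real.logb 2 y - (1 - y) * Real.logb 2 (1 - y)

lemma binEnt_eq (y : ℝ) : binEnt y = (Real.log 2)⁻¹ * Real.binEntropy y := by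
  unfold binEnt Real.binEntropy Real.logb
  rw [Real.log_inv, Real.log_inv]
  field_simp
  ring

lemma aux_concave (x₀ x₁ : ℝ) (hx₀ : 0 < x₀) (hx₁ : 0 < x₁) (g : ℝ → ℝ)
    (hg : ConvexOn ℝ (Set.Icc x₀ x₁) g)
    (hgl : ∀ x ∈ Set.Icc x₀ x₁, 0 ≤ g x / x)
    (hgu : ∀ x ∈ Set.Icc x₀ x₁, g x / x ≤ 1 / 2) :
    ConcaveOn ℝ (Set.Icc x₀ x₁) (fun x => x * Real.binEntropy (1 / 2 - g x / x)) := by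
  refine ⟨convex_Icc _ _, ?_⟩
  intro x hx y hy a b ha hb hab
  simp only [smul_eq_mul]
  have hxpos : 0 < x := lt_of_lt_of_le hx₀ hx.1
  have hypos : 0 < y := lt_of_lt_of_le hx₀ hy.1
  set z := a * x + b * y with hzdef
  have hz : z ∈ Set.Icc x₀ x₁ := (convex_Icc x₀ x₁) hx hy ha hb hab
  have hzpos : 0 < z := lt_of_lt_of_le hx₀ hz.1
  -- bounds on g
  have hgx0 : 0 ≤ g x := by have h := hgl x hx; rw [le_div_iff₀ hxpos] at h; linarith
  have hgy0 : 0 ≤ g y := by have h := hgl y hy; rw [le_div_iff₀ hypos] at h; linarith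
  have hgx2 : g x ≤ x / 2 := by have h := hgu x hx; rw [div_le_iff₀ hxpos] at h; linarith
  have hgy2 : g y ≤ y / 2 := by have h := hgu y hy; rw [div_le_iff₀ hypos] at h; linarith
  have hgz0 : 0 ≤ g z := by have h := hgl z hz; rw [le_div_iff₀ hzpos] at h; linarith
  -- convexity of g
  have hconv : g z ≤ a * g x + b * g y := by
    have := hg.2 hx hy ha hb hab
    simpa using this
  set t := a * g x + b * g y with htdef
  have ht0 : 0 ≤ t := by positivity
  have ht2 : t ≤ z / 2 := by nlinarith
  -- monotonicity step
  have hmono : Real.binEntropy (1 / 2 - t / z) ≤ Real.binEntropy (1 / 2 - g z / z) := by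
    have h1 : (1 / 2 - t / z) ∈ Set.Icc (0:ℝ) 2⁻¹ := by
      constructor
      · have : t / z ≤ 1 / 2 := by rw [div_le_iff₀ hzpos]; linarith
        linarith
      · have : 0 ≤ t / z := by positivity
        norm_num; linarith
    have h2 : (1 / 2 - g z / z) ∈ Set.Icc (0:ℝ) 2⁻¹ := by
      constructor
      · linarith [hgu z hz]
      · have := hgl z hz; norm_num; linarith
    have hle : 1 / 2 - t / z ≤ 1 / 2 - g z / z := by
      have : g z / z ≤ t / z := by gcongr
      linarith
    exact Real.binEntropy_strictMonoOn.monotoneOn h1 h2 hle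
  -- concavity step with weights a*x/z and b*y/z
  have hu : (1 / 2 - g x / x) ∈ Set.Icc (0:ℝ) 1 := by
    constructor
    · linarith [hgu x hx]
    · have := hgl x hx; linarith
  have hv : (1 / 2 - g y / y) ∈ Set.Icc (0:ℝ) 1 := by
    constructor
    · linarith [hgu y hy]
    · have := hgl y hy; linarith
  have hla : 0 ≤ a * x / z := by positivity
  have hlb : 0 ≤ b * y / z := by positivity
  have hlab : a * x / z + b * y / z = 1 := by field_simp; exact hzdef.symm
  have hcomb : (a * x / z) • (1 / 2 - g x / x) + (b * y / z) • (1 / 2 - g y / y)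
      = 1 / 2 - t / z := by
    simp only [smul_eq_mul]
    field_simp
    ring
  have hconc := Real.strictConcave_binEntropy.concaveOn.2 hu hv hla hlb hlab
  rw [hcomb] at hconc
  simp only [smul_eq_mul] at hconc
  have hzc : z * ((a * x / z) * Real.binEntropy (1 / 2 - g x / x)
      + (b * y / z) * Real.binEntropy (1 / 2 - g y / y)) ≤ z * Real.binEntropy (1 / 2 - t / z) :=
    mul_le_mul_of_nonneg_left hconc hzpos.le
  have hsimp : z * ((a * x / z) * Real.binEntropy (1 / 2 - g x / x)
      + (b * y / z) * Real.binEntropy (1 / 2 - g y / y))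
      = a * (x * Real.binEntropy (1 / 2 - g x / x)) + b * (y * Real.binEntropy (1 / 2 - g y / y)) := by
    field_simp
  rw [hsimp] at hzc
  calc a * (x * Real.binEntropy (1 / 2 - g x / x)) + b * (y * Real.binEntropy (1 / 2 - g y / y))
      ≤ z * Real.binEntropy (1 / 2 - t / z) := hzc
    _ ≤ z * Real.binEntropy (1 / 2 - g z / z) := mul_le_mul_of_nonneg_left hmono hzpos.le


theorem stmt0 (x₀ x₁ : ℝ) (hx₀ : 0 < x₀) (hx₁ : 0 < x₁) (g : ℝ → ℝ)
    (hg : ConvexOn ℝ (Set.Icc x₀ x₁) g)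
    (hgl : ∀ x ∈ Set.Icc x₀ x₁, 0 ≤ g x / x)
    (hgu : ∀ x ∈ Set.Icc x₀ x₁, g x / x ≤ 1 / 2) :
    ConcaveOn ℝ (Set.Icc x₀ x₁) (fun x => x * binEnt (1 / 2 - g x / x)) := by
  have h := (aux_concave x₀ x₁ hx₀ hx₁ g hg hgl hgu).smul (by positivity : (0:ℝ) ≤ (Real.log 2)⁻¹)
  simp only [smul_eq_mul] at h
  have key : (fun x => x * binEnt (1 / 2 - g x / x))
      = fun x => (Real.log 2)⁻¹ * (x * Real.binEntropy (1 / 2 - g x / x)) := by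
    funext x
    rw [binEnt_eq]
    ring
  rw [key]
  exact h
end

section
/- Define F(x,y) = 2y·log₂(2^x - 1) + 2h(y) - x + 2 and let f(x) denote the unique root of F(x,·) = 0 in (0, 1/2] for x ≥ 3. Then f is a non-decreasing function of x on [3, ∞). -/
/-- The function `F(x,y) = 2y·log₂(2^x - 1) + 2h(y) - x + 2`. -/
noncomputable def Ffun (x y : ℝ) : ℝ :=
  2 * y * Real.logb 2 ((2 : ℝ) ^ x - 1) + 2 * binEnt y - x + 2

open Real Set

lemma two_rpow_pos' (x : ℝ) : (0:ℝ) < 2 ^ x := Real.rpow_pos_of_pos two_pos x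

lemma seven_le (x : ℝ) (hx : 3 ≤ x) : (7:ℝ) ≤ 2 ^ x - 1 := by
  have h8 : (8:ℝ) ≤ 2 ^ x := by
    have : (2:ℝ) ^ (3:ℝ) ≤ 2 ^ x := Real.rpow_le_rpow_of_exponent_le one_le_two hx
    have h3 : (2:ℝ) ^ (3:ℝ) = 8 := by
      rw [show (3:ℝ) = ((3:ℕ):ℝ) by norm_num, Real.rpow_natCast]; norm_num
    linarith
  linarith

lemma mulLog_hasDerivAt {z : ℝ} (hz : z ≠ 0) :
    HasDerivAt (fun z : ℝ => z * Real.log z) (Real.log z + 1) z := by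
  have := (hasDerivAt_id z).mul (Real.hasDerivAt_log hz)
  refine this.congr_deriv ?_
  simp [hz]

lemma Ffun_hasDerivAt_y (x y : ℝ) (hy0 : 0 < y) (hy1 : y < 1) :
    HasDerivAt (fun y => Ffun x y)
      (2 / Real.log 2 * (Real.log ((2:ℝ)^x - 1) + Real.log (1-y) - Real.log y)) y := by
  have hL : Real.log 2 ≠ 0 := (Real.log_pos one_lt_two).ne'
  have hF : (fun y => Ffun x y) = fun y =>
      (2 * Real.log ((2:ℝ)^x - 1) * y + 2 * (-(y * Real.log y) - ((1-y) * Real.log (1-y))))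
        / Real.log 2 - x + 2 := by
    funext y; simp only [Ffun, binEnt, Real.logb]; field_simp
  rw [hF]
  have h1 : HasDerivAt (fun y : ℝ => y * Real.log y) (Real.log y + 1) y :=
    mulLog_hasDerivAt hy0.ne'
  have hu : HasDerivAt (fun y : ℝ => 1 - y) (-1) y := by
    simpa using (hasDerivAt_id y).const_sub (1:ℝ)
  have h2 : HasDerivAt (fun y : ℝ => (1-y) * Real.log (1-y)) (-(Real.log (1-y) + 1)) y := by
    have h2' := (mulLog_hasDerivAt (z := 1-y) (by linarith)).comp y hu
    exact h2'.congr_deriv (by ring)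
  have h3 := ((((hasDerivAt_id y).const_mul
      (2 * Real.log ((2:ℝ)^x - 1))).add ((h1.neg.sub h2).const_mul 2)).div_const
      (Real.log 2)).sub_const x |>.add_const 2
  refine h3.congr_deriv ?_
  field_simp
  ring

lemma Ffun_strictMonoOn (x : ℝ) (hx : 3 ≤ x) :
    StrictMonoOn (fun y => Ffun x y) (Ioc (0:ℝ) (1/2)) := by
  have h7 := seven_le x hx
  apply strictMonoOn_of_deriv_pos (convex_Ioc _ _)
  · intro y hy
    exact (Ffun_hasDerivAt_y x y hy.1 (by have := hy.2; linarith)).continuousAt.continuousWithinAt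
  · rw [interior_Ioc]
    intro y hy
    rw [(Ffun_hasDerivAt_y x y hy.1 (by have := hy.2; linarith)).deriv]
    have hL : (0:ℝ) < Real.log 2 := Real.log_pos one_lt_two
    have hlog7 : (0:ℝ) < Real.log ((2:ℝ)^x - 1) := Real.log_pos (by linarith)
    have hlt : Real.log y < Real.log (1-y) := Real.log_lt_log hy.1 (by have := hy.2; linarith)
    have : (0:ℝ) < Real.log ((2:ℝ)^x - 1) + Real.log (1-y) - Real.log y := by linarith
    positivity

lemma Ffun_hasDerivAt_x (a t : ℝ) (ht : (2:ℝ)^t - 1 ≠ 0) :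
    HasDerivAt (fun t => Ffun t a)
      (2 * a * (((2:ℝ)^t - 1)⁻¹ * ((2:ℝ)^t * Real.log 2) / Real.log 2) - 1) t := by
  have hF : (fun t => Ffun t a) = fun t =>
      2 * a * (Real.log ((2:ℝ)^t - 1) / Real.log 2) + 2 * binEnt a - t + 2 := by
    funext t; simp only [Ffun, Real.logb]
  rw [hF]
  have h2t : HasDerivAt (fun t : ℝ => (2:ℝ)^t) ((2:ℝ)^t * Real.log 2) t :=
    (Real.hasStrictDerivAt_const_rpow two_pos t).hasDerivAt
  have hlog : HasDerivAt (fun t : ℝ => Real.log ((2:ℝ)^t - 1))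
      (((2:ℝ)^t - 1)⁻¹ * ((2:ℝ)^t * Real.log 2)) t :=
    by have := (Real.hasDerivAt_log ht).comp t (h2t.sub_const 1); exact this
  have h := (((hlog.div_const (Real.log 2)).const_mul (2*a)).add_const
      (2 * binEnt a)).sub (hasDerivAt_id' (𝕜 := ℝ) (x := t)) |>.add_const 2
  exact h

lemma Ffun_anti (a x y : ℝ) (hx : 3 ≤ x) (hxy : x < y) (ha : 0 < a)
    (hac : 2 * a < 1 - (2:ℝ)^(-x)) : Ffun y a < Ffun x a := by
  have key : StrictAntiOn (fun t => Ffun t a) (Icc x y) := by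
    apply strictAntiOn_of_deriv_neg (convex_Icc _ _)
    · intro t htm
      have h7 := seven_le t (hx.trans htm.1)
      exact (Ffun_hasDerivAt_x a t (by linarith)).continuousAt.continuousWithinAt
    · rw [interior_Icc]
      intro t htm
      have htx : x ≤ t := htm.1.le
      have h7 := seven_le t (by linarith)
      rw [(Ffun_hasDerivAt_x a t (by linarith)).deriv]
      have hL : (0:ℝ) < Real.log 2 := Real.log_pos one_lt_two
      have hP : (0:ℝ) < (2:ℝ)^t - 1 := by linarith
      have heq : 2 * a * (((2:ℝ)^t - 1)⁻¹ * ((2:ℝ)^t * Real.log 2) / Real.log 2)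
          = 2 * a * (2:ℝ)^t / ((2:ℝ)^t - 1) := by
        field_simp
      rw [heq, sub_neg, div_lt_one hP]
      have hmono : (2:ℝ)^(-t) ≤ (2:ℝ)^(-x) :=
        Real.rpow_le_rpow_of_exponent_le one_le_two (by linarith)
      have hinv : (2:ℝ)^(-t) * (2:ℝ)^t = 1 := by
        rw [← Real.rpow_add two_pos]; norm_num
      have htp := two_rpow_pos' t
      nlinarith
  exact key (left_mem_Icc.mpr hxy.le) (right_mem_Icc.mpr hxy.le) hxy

lemma binEnt_nonneg {y : ℝ} (h0 : 0 ≤ y) (h1 : y ≤ 1) : 0 ≤ binEnt y := by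
  unfold binEnt
  have h2 : Real.logb 2 y ≤ 0 := Real.logb_nonpos one_lt_two h0 h1
  have h3 : Real.logb 2 (1-y) ≤ 0 := Real.logb_nonpos one_lt_two (by linarith) (by linarith)
  nlinarith

lemma F_c_pos (x : ℝ) (hx : 3 ≤ x) : 0 < Ffun x ((1 - (2:ℝ)^(-x))/2) := by
  set t : ℝ := (2:ℝ)^(-x) with ht
  have ht0 : 0 < t := two_rpow_pos' _
  have ht8 : t ≤ 1/8 := by
    have h8 : (8:ℝ) ≤ 2^x := by have := seven_le x hx; linarith
    rw [ht, Real.rpow_neg (by norm_num : (0:ℝ) ≤ 2)]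
    have hinv : ((2:ℝ)^x)⁻¹ ≤ (8:ℝ)⁻¹ := by
      apply inv_anti₀ (by norm_num) h8
    linarith [hinv]
  set c : ℝ := (1 - t)/2 with hc
  have hc0 : 0 ≤ c := by rw [hc]; linarith
  have hc1 : c ≤ 1 := by rw [hc]; linarith
  -- logb 2 (2^x - 1) ≥ x - 1
  have hlb : x - 1 ≤ Real.logb 2 ((2:ℝ)^x - 1) := by
    have hxm : (2:ℝ)^(x-1) ≤ (2:ℝ)^x - 1 := by
      have hsplit : (2:ℝ)^x = 2 * (2:ℝ)^(x-1) := by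
        have h := Real.rpow_add two_pos 1 (x-1)
        rw [Real.rpow_one, show (1:ℝ)+(x-1) = x by ring] at h
        exact h
      have hone : (1:ℝ) ≤ (2:ℝ)^(x-1) := by
        have := Real.rpow_le_rpow_of_exponent_le one_le_two (by linarith : (0:ℝ) ≤ x - 1)
        simpa using this
      linarith
    calc x - 1 = Real.logb 2 ((2:ℝ)^(x-1)) := (Real.logb_rpow two_pos (by norm_num)).symm
      _ ≤ Real.logb 2 ((2:ℝ)^x - 1) :=
        Real.logb_le_logb_of_le one_lt_two (two_rpow_pos' _) hxm
  -- (x-1) * t ≤ 1/4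
  have hkey : (x - 1) * t ≤ 1/4 := by
    have hexp : (2:ℝ)^(x-3) = Real.exp (Real.log 2 * (x-3)) := Real.rpow_def_of_pos two_pos _
    have hlin : 1 + Real.log 2 * (x-3) ≤ (2:ℝ)^(x-3) := by
      rw [hexp]
      have := Real.add_one_le_exp (Real.log 2 * (x-3))
      linarith
    have hlog2 : (1/2:ℝ) ≤ Real.log 2 := by
      have := Real.log_two_gt_d9; linarith
    have hx1 : x - 1 ≤ (2:ℝ)^(x-2) := by
      have hsplit : (2:ℝ)^(x-2) = 2 * (2:ℝ)^(x-3) := by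
        have h := Real.rpow_add two_pos 1 (x-3)
        rw [Real.rpow_one, show (1:ℝ)+(x-3) = x-2 by ring] at h
        exact h
      nlinarith
    have hmul : (2:ℝ)^(x-2) * t = 1/4 := by
      rw [ht, ← Real.rpow_add two_pos, show x - 2 + -x = (-2:ℝ) by ring,
        Real.rpow_neg (by norm_num), show (2:ℝ) = ((2:ℕ):ℝ) by norm_num, Real.rpow_natCast]
      norm_num
    nlinarith
  have hbe : 0 ≤ binEnt c := binEnt_nonneg hc0 hc1
  have hmul2 : 2 * c * (x - 1) ≤ 2 * c * Real.logb 2 ((2:ℝ)^x - 1) := by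
    apply mul_le_mul_of_nonneg_left hlb
    linarith
  have : Ffun x c = 2 * c * Real.logb 2 ((2:ℝ)^x - 1) + 2 * binEnt c - x + 2 := rfl
  rw [this]
  have hval : 2 * c * (x - 1) - x + 2 = 1 - (x - 1) * t := by
    rw [hc]; ring
  nlinarith

theorem stmt3 (f : ℝ → ℝ)
    (hroot : ∀ x, 3 ≤ x → f x ∈ Set.Ioc (0 : ℝ) (1 / 2) ∧ Ffun x (f x) = 0)
    (huniq : ∀ x, 3 ≤ x → ∀ y ∈ Set.Ioc (0 : ℝ) (1 / 2), Ffun x y = 0 → y = f x) :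
    ∀ x y : ℝ, 3 ≤ x → x ≤ y → f x ≤ f y := by
  intro x y hx hxy
  rcases eq_or_lt_of_le hxy with rfl | hlt
  · exact le_rfl
  have hy : 3 ≤ y := hx.trans hxy
  obtain ⟨hax, hFx⟩ := hroot x hx
  obtain ⟨hby, hFy⟩ := hroot y hy
  -- step 1 : f x < (1 - 2^{-x})/2
  have ht0 : 0 < (2:ℝ)^(-x) := two_rpow_pos' _
  have ht1 : (2:ℝ)^(-x) < 1 := by
    have := Real.rpow_lt_rpow_of_exponent_lt one_lt_two (by linarith : -x < 0)
    simpa using this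
  have hc_mem : (1 - (2:ℝ)^(-x))/2 ∈ Ioc (0:ℝ) (1/2) := ⟨by linarith, by linarith⟩
  have h1 : f x < (1 - (2:ℝ)^(-x))/2 := by
    have := (Ffun_strictMonoOn x hx).lt_iff_lt hax hc_mem
    exact this.mp (by simpa [hFx] using F_c_pos x hx)
  -- step 2 : Ffun y (f x) < 0
  have h2 : Ffun y (f x) < 0 := by
    have := Ffun_anti (f x) x y hx hlt hax.1 (by linarith)
    rw [hFx] at this
    exact this
  -- step 3 : f x < f y
  have h3 : f x < f y := by
    have := (Ffun_strictMonoOn y hy).lt_iff_lt hax hby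
    exact this.mp (by simpa [hFy] using h2)
  exact h3.le
end

section
/- Let ρ_XB = (1/2)(|+⟩⟨+| ⊗ ρ⁺ + |−⟩⟨−| ⊗ ρ⁻) be a classical-quantum state on ℂ²⊗ℂ², where ρ⁺ = (p/2)·[[1+δ_z, δ_x],[δ_x, 1-δ_z]] in the z-basis and ρ⁻ = Z ρ⁺ Z with Z the phase flip swapping |+⟩ and |−⟩ (acting as [[1,0],[0,-1]] in the z basis up to basis relabeling), with δ_x² + δ_z² ≤ 1 and p = 1. Then the conditional entropy satisfies H(X|B)_{ρ_XB} = h((1 - √(δ_x² + δ_z²))/2) + 1 - h((1 - δ_z)/2), where h is the binary entropy. In particular H(X|B) ≤ h((1-δ_x)/2). -/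
open scoped ComplexOrder
open Matrix Kronecker

/-- Von Neumann entropy (base-2) of a Hermitian matrix, via its eigenvalues. -/
noncomputable def vNEnt {n : Type*} [Fintype n] [DecidableEq n] (A : Matrix n n ℂ) : ℝ :=
  open scoped Classical in
  if h : A.IsHermitian then
    -∑ i, h.eigenvalues i * Real.logb 2 (h.eigenvalues i)
  else 0

/-! ### Analytic lemmas -/

noncomputable def phiF (t : ℝ) : ℝ := (1+t)*Real.log (1+t) + (1-t)*Real.log (1-t)

lemma hasSumPhi {t : ℝ} (h : |t| < 1) :
    HasSum (fun m : ℕ => 2*t^(2*m+2)/((2*m+1)*(2*m+2))) (phiF t) := by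
  obtain ⟨h1, h2⟩ := abs_lt.mp h
  have ht2 : |t^2| < 1 := by
    rw [abs_pow]
    calc |t|^2 < 1^2 := by
          apply pow_lt_pow_left₀ h (abs_nonneg t) (by norm_num)
      _ = 1 := one_pow 2
  have hL := Real.hasSum_log_sub_log_of_abs_lt_one h
  have hO := Real.hasSum_pow_div_log_of_abs_lt_one ht2
  have hc := (hL.mul_left t).sub hO
  have heq : (fun k : ℕ => t * ((2:ℝ) * (1/(2*k+1)) * t^(2*k+1)) - (t^2)^(k+1)/(k+1))
      = fun m : ℕ => 2*t^(2*m+2)/((2*m+1)*(2*m+2)) := by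
    funext m
    have e1 : (t^2)^(m+1) = t^(2*m+2) := by rw [← pow_mul]; ring_nf
    have e2 : t * t^(2*m+1) = t^(2*m+2) := by rw [← pow_succ']
    have d1 : ((2:ℝ)*m+1) ≠ 0 := by positivity
    have d2 : ((m:ℝ)+1) ≠ 0 := by positivity
    have d3 : ((2:ℝ)*m+2) ≠ 0 := by positivity
    field_simp [e1]
    ring_nf
  have hsum : t * (Real.log (1+t) - Real.log (1-t)) - -Real.log (1-t^2) = phiF t := by
    rw [show (1:ℝ)-t^2 = (1+t)*(1-t) by ring,
      Real.log_mul (by linarith) (by linarith), phiF]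
    ring
  rw [heq, hsum] at hc
  exact hc

lemma superadd_lt {a b : ℝ} (ha : 0 ≤ a) (hb : 0 ≤ b) (h : a^0 = a^0 ∧ a^2 + b^2 < 1) :
    phiF a + phiF b ≤ phiF (Real.sqrt (a^2+b^2)) := by
  obtain ⟨-, h⟩ := h
  set r := Real.sqrt (a^2+b^2) with hr
  have hr0 : 0 ≤ r := Real.sqrt_nonneg _
  have hr2 : r^2 = a^2+b^2 := Real.sq_sqrt (by positivity)
  have hrlt : r < 1 := by nlinarith [hr2]
  have hba : |a| < 1 := by rw [abs_of_nonneg ha]; nlinarith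
  have hbb : |b| < 1 := by rw [abs_of_nonneg hb]; nlinarith
  have hbr : |r| < 1 := by rwa [abs_of_nonneg hr0]
  refine hasSum_le ?_ ((hasSumPhi hba).add (hasSumPhi hbb)) (hasSumPhi hbr)
  intro m
  have hD : (0:ℝ) < (2*m+1)*(2*m+2) := by positivity
  have key : a^(2*m+2) + b^(2*m+2) ≤ r^(2*m+2) := by
    have := pow_add_pow_le (sq_nonneg a) (sq_nonneg b) (Nat.succ_ne_zero m)
    calc a^(2*m+2) + b^(2*m+2) = (a^2)^(m+1) + (b^2)^(m+1) := by
          rw [← pow_mul, ← pow_mul]; ring_nf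
      _ ≤ (a^2+b^2)^(m+1) := this
      _ = (r^2)^(m+1) := by rw [hr2]
      _ = r^(2*m+2) := by rw [← pow_mul]; ring_nf
  have : 2*a^(2*m+2)/((2*↑m+1)*(2*↑m+2)) + 2*b^(2*m+2)/((2*↑m+1)*(2*↑m+2))
      = 2*(a^(2*m+2)+b^(2*m+2))/((2*↑m+1)*(2*↑m+2)) := by ring
  rw [this]
  gcongr

lemma phiF_cont : Continuous phiF := by
  have h := Real.continuous_mul_log
  exact ((h.comp (continuous_const.add continuous_id)).add
    (h.comp (continuous_const.sub continuous_id)))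

lemma superadd {a b : ℝ} (ha : 0 ≤ a) (hb : 0 ≤ b) (h : a^2 + b^2 ≤ 1) :
    phiF a + phiF b ≤ phiF (Real.sqrt (a^2+b^2)) := by
  rcases lt_or_eq_of_le h with h' | h'
  · exact superadd_lt ha hb ⟨rfl, h'⟩
  · have hr1 : Real.sqrt (a^2+b^2) = 1 := by rw [h', Real.sqrt_one]
    rw [hr1]
    have key : ∀ lam : ℝ, lam ∈ Set.Ioo (0:ℝ) 1 →
        phiF (lam*a) + phiF (lam*b) ≤ phiF lam := by
      intro lam ⟨hl0, hl1⟩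
      have h2 : (lam*a)^2 + (lam*b)^2 = lam^2 := by linear_combination lam^2 * h'
      have hlt : (lam*a)^2 + (lam*b)^2 < 1 := by rw [h2]; nlinarith
      have := superadd_lt (by positivity) (by positivity) ⟨rfl, hlt⟩
      rwa [show Real.sqrt ((lam*a)^2+(lam*b)^2) = lam by
        rw [h2, Real.sqrt_sq hl0.le]] at this
    have t1 : Filter.Tendsto (fun lam : ℝ => phiF (lam*a) + phiF (lam*b))
        (nhdsWithin 1 (Set.Iio 1)) (nhds (phiF a + phiF b)) := by
      have : Continuous fun lam : ℝ => phiF (lam*a) + phiF (lam*b) :=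
        (phiF_cont.comp (continuous_id.mul continuous_const)).add
          (phiF_cont.comp (continuous_id.mul continuous_const))
      simpa using (this.tendsto 1).mono_left nhdsWithin_le_nhds
    have t2 : Filter.Tendsto phiF (nhdsWithin 1 (Set.Iio 1)) (nhds (phiF 1)) :=
      (phiF_cont.tendsto 1).mono_left nhdsWithin_le_nhds
    refine le_of_tendsto_of_tendsto t1 t2 ?_
    filter_upwards [Ioo_mem_nhdsLT_of_mem (show (1:ℝ) ∈ Set.Ioc 0 1 by norm_num)] with lam hlam
    exact key lam hlam

lemma half_log {y : ℝ} (hy : 0 ≤ y) :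
    y * Real.log (y/2) = y * Real.log y - y * Real.log 2 := by
  rcases eq_or_lt_of_le hy with h | h
  · simp [← h]
  · rw [Real.log_div h.ne' (by norm_num)]; ring

lemma binEnt_phi {t : ℝ} (h1 : -1 ≤ t) (h2 : t ≤ 1) :
    binEnt ((1-t)/2) = 1 - phiF t / (2 * Real.log 2) := by
  have hl2 : Real.log 2 ≠ 0 :=
    Real.log_ne_zero_of_pos_of_ne_one (by norm_num) (by norm_num)
  have e1 : (1:ℝ) - (1-t)/2 = (1+t)/2 := by ring
  rw [binEnt, e1, Real.logb, Real.logb, phiF]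
  have hA := half_log (show (0:ℝ) ≤ 1-t by linarith)
  have hB := half_log (show (0:ℝ) ≤ 1+t by linarith)
  field_simp
  ring_nf
  ring_nf at hA hB
  linarith [hA, hB]

lemma phiF_neg (t : ℝ) : phiF (-t) = phiF t := by
  rw [phiF, phiF, show (1:ℝ)+(-t) = 1-t by ring, show (1:ℝ)-(-t) = 1+t by ring]
  ring

lemma phiF_abs (t : ℝ) : phiF |t| = phiF t := by
  rcases abs_cases t with ⟨h, -⟩ | ⟨h, -⟩
  · rw [h]
  · rw [h, phiF_neg]

lemma half_logb {y : ℝ} (hy : 0 ≤ y) :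
    y/2 * Real.logb 2 (y/2) = y/2 * Real.logb 2 y - y/2 := by
  rcases eq_or_lt_of_le hy with h | h
  · simp [← h]
  · rw [Real.logb_div h.ne' (by norm_num), Real.logb_self_eq_one (by norm_num)]
    ring

/-! ### Eigenvalue machinery -/

open Polynomial in
lemma det_smul_one_sub_eq {n : Type*} [Fintype n] [DecidableEq n]
    {A : Matrix n n ℂ} (hA : A.IsHermitian) (x : ℂ) :
    (x • (1 : Matrix n n ℂ) - A).det = ∏ i, (x - (hA.eigenvalues i : ℂ)) := by
  set U : Matrix n n ℂ := (hA.eigenvectorUnitary : Matrix n n ℂ) with hU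
  have hmem := hA.eigenvectorUnitary.2
  have hU1 : U * star U = 1 := (Matrix.mem_unitaryGroup_iff).mp hmem
  set d : n → ℂ := RCLike.ofReal ∘ hA.eigenvalues with hd
  have hdiag : x • (1 : Matrix n n ℂ) - Matrix.diagonal d
      = Matrix.diagonal (fun i => x - d i) := by
    ext i j
    by_cases h : i = j <;> simp [Matrix.diagonal, Matrix.one_apply, h]
  have hspec : A = U * Matrix.diagonal d * star U := hA.spectral_theorem
  have key : x • (1 : Matrix n n ℂ) - A
      = U * (x • (1 : Matrix n n ℂ) - Matrix.diagonal d) * star U := by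
    rw [hspec, Matrix.mul_sub, Matrix.sub_mul]
    congr 1
    rw [mul_smul_comm, Matrix.mul_one, Matrix.smul_mul, hU1]
  rw [key, Matrix.det_mul, Matrix.det_mul, mul_comm (U.det), mul_assoc,
    ← Matrix.det_mul, hU1, Matrix.det_one, mul_one, hdiag, Matrix.det_diagonal]
  rfl

open Polynomial in
lemma sum_eig {n : Type*} [Fintype n] [DecidableEq n]
    {A : Matrix n n ℂ} (hA : A.IsHermitian) (μ : n → ℝ)
    (h : ∀ x : ℂ, (x • (1 : Matrix n n ℂ) - A).det = ∏ i, (x - (μ i : ℂ)))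
    (f : ℝ → ℝ) : ∑ i, f (hA.eigenvalues i) = ∑ i, f (μ i) := by
  have hpoly : (∏ i, (X - C ((hA.eigenvalues i : ℂ)))) = ∏ i, (X - C ((μ i : ℂ))) := by
    apply Polynomial.funext
    intro x
    simp only [eval_prod, eval_sub, eval_X, eval_C]
    rw [← det_smul_one_sub_eq hA x, h x]
  have hroots : Multiset.map (fun i => ((hA.eigenvalues i : ℂ))) Finset.univ.val
      = Multiset.map (fun i => ((μ i : ℂ))) Finset.univ.val := by
    have r1 := Polynomial.roots_multiset_prod_X_sub_C
      (Multiset.map (fun i => ((hA.eigenvalues i : ℂ))) Finset.univ.val)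
    have r2 := Polynomial.roots_multiset_prod_X_sub_C
      (Multiset.map (fun i => ((μ i : ℂ))) Finset.univ.val)
    rw [Multiset.map_map] at r1 r2
    have e1 : (∏ i, (X - C ((hA.eigenvalues i : ℂ)))) =
        (Multiset.map ((fun a => X - C a) ∘ fun i => ((hA.eigenvalues i : ℂ)))
          Finset.univ.val).prod := rfl
    have e2 : (∏ i, (X - C ((μ i : ℂ)))) =
        (Multiset.map ((fun a => X - C a) ∘ fun i => ((μ i : ℂ)))
          Finset.univ.val).prod := rfl
    rw [← r1, ← r2, ← e1, ← e2, hpoly]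
  have hmul : Multiset.map hA.eigenvalues Finset.univ.val
      = Multiset.map μ Finset.univ.val := by
    apply Multiset.map_injective Complex.ofReal_injective
    rw [Multiset.map_map, Multiset.map_map]
    exact hroots
  calc ∑ i, f (hA.eigenvalues i)
      = (Multiset.map f (Multiset.map hA.eigenvalues Finset.univ.val)).sum := by
        rw [Multiset.map_map]; rfl
    _ = (Multiset.map f (Multiset.map μ Finset.univ.val)).sum := by rw [hmul]
    _ = ∑ i, f (μ i) := by rw [Multiset.map_map]; rfl

lemma vNEnt_eq {n : Type*} [Fintype n] [DecidableEq n]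
    {A : Matrix n n ℂ} (hA : A.IsHermitian) (μ : n → ℝ)
    (h : ∀ x : ℂ, (x • (1 : Matrix n n ℂ) - A).det = ∏ i, (x - (μ i : ℂ))) :
    vNEnt A = -∑ i, μ i * Real.logb 2 (μ i) := by
  rw [vNEnt, dif_pos hA, neg_inj]
  exact sum_eig hA μ h (fun y => y * Real.logb 2 y)

/-! ### Hermiticity helpers -/

lemma kron_herm {m n : Type*} [Fintype m] [Fintype n] [DecidableEq m] [DecidableEq n]
    {A : Matrix m m ℂ} {B : Matrix n n ℂ}
    (hA : A.IsHermitian) (hB : B.IsHermitian) : (A ⊗ₖ B).IsHermitian := by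
  rw [Matrix.IsHermitian] at *
  ext ⟨i,j⟩ ⟨k,l⟩
  rw [Matrix.conjTranspose_apply, Matrix.kroneckerMap_apply, Matrix.kroneckerMap_apply,
    star_mul']
  rw [← Matrix.conjTranspose_apply A, ← Matrix.conjTranspose_apply B, hA, hB]

lemma herm_smul_half {n : Type*} [Fintype n] [DecidableEq n] {A : Matrix n n ℂ}
    (hA : A.IsHermitian) : (((1:ℂ)/2) • A).IsHermitian := by
  rw [Matrix.IsHermitian] at *
  rw [Matrix.conjTranspose_smul, hA]
  norm_num

lemma herm22 (a c : ℝ) (b : ℂ) :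
    (Matrix.of ![![(a:ℂ), b], ![(starRingEnd ℂ) b, (c:ℂ)]]).IsHermitian := by
  rw [Matrix.IsHermitian]
  ext i j
  fin_cases i <;> fin_cases j <;> simp [Matrix.conjTranspose_apply]

def e4 : Fin 4 ≃ Fin 2 × Fin 2 :=
  ⟨![(0,0),(0,1),(1,0),(1,1)], fun p => ![![0,1],![2,3]] p.1 p.2, by decide, by decide⟩


lemma rho_m_explicit (δz δx : ℝ) :
    (Matrix.of ![![(1 : ℂ), 0], ![0, (-1 : ℂ)]]) *
      (((1 : ℂ) / 2) •
        Matrix.of ![![(1 : ℂ) + (δz : ℂ), (δx : ℂ)], ![(δx : ℂ), (1 : ℂ) - (δz : ℂ)]]) *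
      (Matrix.of ![![(1 : ℂ), 0], ![0, (-1 : ℂ)]])
    = ((1 : ℂ) / 2) •
      Matrix.of ![![(1 : ℂ) + (δz : ℂ), -(δx : ℂ)], ![-(δx : ℂ), (1 : ℂ) - (δz : ℂ)]] := by
  ext i j
  fin_cases i <;> fin_cases j <;>
    simp [Matrix.mul_apply, Fin.sum_univ_two]

lemma rho_B_explicit (δz δx : ℝ) :
    ((1 : ℂ) / 2) • ((((1 : ℂ) / 2) •
        Matrix.of ![![(1 : ℂ) + (δz : ℂ), (δx : ℂ)], ![(δx : ℂ), (1 : ℂ) - (δz : ℂ)]]) +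
      (((1 : ℂ) / 2) •
        Matrix.of ![![(1 : ℂ) + (δz : ℂ), -(δx : ℂ)], ![-(δx : ℂ), (1 : ℂ) - (δz : ℂ)]]))
    = Matrix.of ![![(1+(δz:ℂ))/2, 0], ![0, (1-(δz:ℂ))/2]] := by
  ext i j
  fin_cases i <;> fin_cases j <;> simp <;> ring

lemma herm_B_explicit (δz : ℝ) :
    (Matrix.of ![![(1+(δz:ℂ))/2, 0], ![0, (1-(δz:ℂ))/2]]).IsHermitian := by
  rw [Matrix.IsHermitian]
  ext i j
  fin_cases i <;> fin_cases j <;>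
    simp [Matrix.conjTranspose_apply, Complex.ext_iff]

lemma det_B_explicit (δz : ℝ) (x : ℂ) :
    (x • (1 : Matrix (Fin 2) (Fin 2) ℂ)
        - Matrix.of ![![(1+(δz:ℂ))/2, 0], ![0, (1-(δz:ℂ))/2]]).det
      = ∏ i, (x - ((![(1+δz)/2, (1-δz)/2] : Fin 2 → ℝ) i : ℂ)) := by
  rw [Matrix.det_fin_two, Fin.prod_univ_two]
  push_cast
  simp [Matrix.one_apply]

lemma sub_XB_explicit (δz δx : ℝ) (x : ℂ) :
    (x • (1 : Matrix (Fin 2 × Fin 2) (Fin 2 × Fin 2) ℂ)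
      - ((1 : ℂ) / 2) • ((((1 : ℂ) / 2) • Matrix.of ![![(1 : ℂ), 1], ![1, (1 : ℂ)]]) ⊗ₖ
          (((1 : ℂ) / 2) •
            Matrix.of ![![(1 : ℂ) + (δz : ℂ), (δx : ℂ)], ![(δx : ℂ), (1 : ℂ) - (δz : ℂ)]])
        + (((1 : ℂ) / 2) • Matrix.of ![![(1 : ℂ), -1], ![-1, (1 : ℂ)]]) ⊗ₖ
          (((1 : ℂ) / 2) •
            Matrix.of ![![(1 : ℂ) + (δz : ℂ), -(δx : ℂ)], ![-(δx : ℂ), (1 : ℂ) - (δz : ℂ)]]))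
      ).submatrix e4 e4
    = !![x-(1+(δz:ℂ))/4, 0, 0, -((δx:ℂ)/4); 0, x-(1-(δz:ℂ))/4, -((δx:ℂ)/4), 0;
        0, -((δx:ℂ)/4), x-(1+(δz:ℂ))/4, 0; -((δx:ℂ)/4), 0, 0, x-(1-(δz:ℂ))/4] := by
  ext i j
  fin_cases i <;> fin_cases j <;>
    simp [e4, Matrix.submatrix_apply, Matrix.one_apply, Matrix.kroneckerMap_apply,
      Prod.ext_iff] <;> ring

lemma det4_explicit (δz δx : ℝ) (x : ℂ) :
    (!![x-(1+(δz:ℂ))/4, 0, 0, -((δx:ℂ)/4); 0, x-(1-(δz:ℂ))/4, -((δx:ℂ)/4), 0;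
        0, -((δx:ℂ)/4), x-(1+(δz:ℂ))/4, 0; -((δx:ℂ)/4), 0, 0, x-(1-(δz:ℂ))/4]
      : Matrix (Fin 4) (Fin 4) ℂ).det
    = ((x-(1+(δz:ℂ))/4)*(x-(1-(δz:ℂ))/4) - ((δx:ℂ)/4)^2)^2 := by
  simp [Matrix.det_succ_row_zero, Fin.sum_univ_succ, Fin.castSucc, Fin.castAdd,
    Fin.castLE, Matrix.cons_val_succ, Fin.succAbove]
  ring

/-! ### Main theorem -/

theorem stmt15 (δz δx : ℝ) (hδ : δx ^ 2 + δz ^ 2 ≤ 1)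
    (ρp ρm : Matrix (Fin 2) (Fin 2) ℂ)
    (hρp : ρp = ((1 : ℂ) / 2) •
      Matrix.of ![![(1 : ℂ) + (δz : ℂ), (δx : ℂ)], ![(δx : ℂ), (1 : ℂ) - (δz : ℂ)]])
    (Z : Matrix (Fin 2) (Fin 2) ℂ)
    (hZ : Z = Matrix.of ![![(1 : ℂ), 0], ![0, (-1 : ℂ)]])
    (hρm : ρm = Z * ρp * Z)
    (plusProj minusProj : Matrix (Fin 2) (Fin 2) ℂ)
    (hplus : plusProj = ((1 : ℂ) / 2) • Matrix.of ![![(1 : ℂ), 1], ![1, (1 : ℂ)]])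
    (hminus : minusProj = ((1 : ℂ) / 2) • Matrix.of ![![(1 : ℂ), -1], ![-1, (1 : ℂ)]])
    (ρXB : Matrix (Fin 2 × Fin 2) (Fin 2 × Fin 2) ℂ)
    (hρXB : ρXB = ((1 : ℂ) / 2) • (plusProj ⊗ₖ ρp + minusProj ⊗ₖ ρm))
    (ρB : Matrix (Fin 2) (Fin 2) ℂ) (hρB : ρB = ((1 : ℂ) / 2) • (ρp + ρm)) :
    vNEnt ρXB - vNEnt ρB =
        binEnt ((1 - Real.sqrt (δx ^ 2 + δz ^ 2)) / 2) + 1 - binEnt ((1 - δz) / 2) ∧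
      vNEnt ρXB - vNEnt ρB ≤ binEnt ((1 - δx) / 2) := by
  -- explicit form of ρm
  have hρm' : ρm = ((1 : ℂ) / 2) •
      Matrix.of ![![(1 : ℂ) + (δz : ℂ), -(δx : ℂ)], ![-(δx : ℂ), (1 : ℂ) - (δz : ℂ)]] := by
    rw [hρm, hρp, hZ]
    exact rho_m_explicit δz δx
  clear hρm hZ
  -- explicit form of ρB
  have hρB' : ρB = Matrix.of ![![(1+(δz:ℂ))/2, 0], ![0, (1-(δz:ℂ))/2]] := by
    rw [hρB, hρp, hρm']
    exact rho_B_explicit δz δx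
  clear hρB
  set r : ℝ := Real.sqrt (δx ^ 2 + δz ^ 2) with hrdef
  have hr0 : 0 ≤ r := Real.sqrt_nonneg _
  have hr1 : r ≤ 1 := Real.sqrt_le_one.mpr hδ
  have hrsq : (r:ℂ)^2 = (δx:ℂ)^2 + (δz:ℂ)^2 := by
    have h : r^2 = δx^2 + δz^2 := Real.sq_sqrt (by positivity)
    exact_mod_cast congrArg (Complex.ofReal) h
  -- Hermiticity
  have h1 : ρp.IsHermitian := by
    rw [hρp]
    apply herm_smul_half
    have := herm22 (1+δz) (1-δz) (δx:ℂ)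
    simpa [Complex.conj_ofReal] using this
  have h2 : ρm.IsHermitian := by
    rw [hρm']
    apply herm_smul_half
    have := herm22 (1+δz) (1-δz) (-(δx:ℂ))
    simpa [Complex.conj_ofReal] using this
  have h3 : plusProj.IsHermitian := by
    rw [hplus]
    apply herm_smul_half
    simpa using herm22 1 1 (1:ℂ)
  have h4 : minusProj.IsHermitian := by
    rw [hminus]
    apply herm_smul_half
    simpa using herm22 1 1 (-1:ℂ)
  have hermXB : ρXB.IsHermitian := by
    rw [hρXB]
    exact herm_smul_half ((kron_herm h3 h1).add (kron_herm h4 h2))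
  have hermB : ρB.IsHermitian := by
    rw [hρB']
    exact herm_B_explicit δz
  -- det identity for ρB
  have detB : ∀ x : ℂ, (x • (1 : Matrix (Fin 2) (Fin 2) ℂ) - ρB).det
      = ∏ i, (x - ((![(1+δz)/2, (1-δz)/2] : Fin 2 → ℝ) i : ℂ)) := by
    intro x
    rw [hρB']
    exact det_B_explicit δz x
  -- det identity for ρXB
  have detXB : ∀ x : ℂ, (x • (1 : Matrix (Fin 2 × Fin 2) (Fin 2 × Fin 2) ℂ) - ρXB).det
      = ∏ p : Fin 2 × Fin 2, (x - ((![(1+r)/4, (1-r)/4] : Fin 2 → ℝ) p.2 : ℂ)) := by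
    intro x
    have hsub : (x • (1 : Matrix (Fin 2 × Fin 2) (Fin 2 × Fin 2) ℂ) - ρXB).submatrix e4 e4
        = !![x-(1+(δz:ℂ))/4, 0, 0, -((δx:ℂ)/4); 0, x-(1-(δz:ℂ))/4, -((δx:ℂ)/4), 0;
            0, -((δx:ℂ)/4), x-(1+(δz:ℂ))/4, 0; -((δx:ℂ)/4), 0, 0, x-(1-(δz:ℂ))/4] := by
      rw [hρXB, hρp, hρm', hplus, hminus]
      exact sub_XB_explicit δz δx x
    have hdet4 : (!![x-(1+(δz:ℂ))/4, 0, 0, -((δx:ℂ)/4); 0, x-(1-(δz:ℂ))/4, -((δx:ℂ)/4), 0;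
            0, -((δx:ℂ)/4), x-(1+(δz:ℂ))/4, 0; -((δx:ℂ)/4), 0, 0, x-(1-(δz:ℂ))/4]
          : Matrix (Fin 4) (Fin 4) ℂ).det
        = ((x-(1+(δz:ℂ))/4)*(x-(1-(δz:ℂ))/4) - ((δx:ℂ)/4)^2)^2 := det4_explicit δz δx x
    rw [← Matrix.det_submatrix_equiv_self e4, hsub, hdet4]
    rw [Fintype.prod_prod_type]
    simp only [Fin.prod_univ_two, Matrix.cons_val_zero, Matrix.cons_val_one, Matrix.head_cons]
    push_cast
    linear_combination (((x-(1+(δz:ℂ))/4)*(x-(1-(δz:ℂ))/4) - ((δx:ℂ)/4)^2) +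
      ((x-(1+(r:ℂ))/4)*(x-(1-(r:ℂ))/4))) * (1/16 : ℂ) * hrsq
  -- entropy values
  have entB : vNEnt ρB = binEnt ((1 - δz) / 2) := by
    rw [vNEnt_eq hermB _ detB, Fin.sum_univ_two]
    simp only [Matrix.cons_val_zero, Matrix.cons_val_one, Matrix.head_cons]
    rw [binEnt, show (1:ℝ) - (1-δz)/2 = (1+δz)/2 by ring]
    ring
  have entXB : vNEnt ρXB = binEnt ((1 - r) / 2) + 1 := by
    rw [vNEnt_eq hermXB _ detXB, Fintype.sum_prod_type]
    simp only [Fin.sum_univ_two, Matrix.cons_val_zero, Matrix.cons_val_one, Matrix.head_cons]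
    have e1 : (1+r)/4 = ((1+r)/2)/2 := by ring
    have e2 : (1-r)/4 = ((1-r)/2)/2 := by ring
    rw [e1, e2, half_logb (by linarith : (0:ℝ) ≤ (1+r)/2),
      half_logb (by linarith : (0:ℝ) ≤ (1-r)/2),
      binEnt, show (1:ℝ) - (1-r)/2 = (1+r)/2 by ring]
    ring
  have habsx : |δx| ≤ 1 := by nlinarith [sq_abs δx, abs_nonneg δx, sq_nonneg δz]
  have habsz : |δz| ≤ 1 := by nlinarith [sq_abs δz, abs_nonneg δz, sq_nonneg δx]
  constructor
  · rw [entB, entXB]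
  · rw [entB, entXB]
    have hL : (0:ℝ) < Real.log 2 := Real.log_pos (by norm_num)
    rw [binEnt_phi (by linarith) hr1, binEnt_phi (by linarith [abs_le.mp habsz])
      (by linarith [abs_le.mp habsz]), binEnt_phi (by linarith [abs_le.mp habsx])
      (by linarith [abs_le.mp habsx])]
    have key : phiF δz + phiF δx ≤ phiF r := by
      have h := superadd (abs_nonneg δz) (abs_nonneg δx)
        (by rw [sq_abs, sq_abs]; linarith)
      rw [phiF_abs, phiF_abs] at h
      rwa [show Real.sqrt (|δz|^2 + |δx|^2) = r by
        rw [sq_abs, sq_abs, hrdef, add_comm]] at h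
    have hdiv : (phiF δz + phiF δx) / (2*Real.log 2) ≤ phiF r / (2*Real.log 2) := by
      gcongr
    rw [add_div] at hdiv
    linarith
end
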